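/- For integers 1 ≤ k ≤ m ≤ n with k ≤ n, the ratio binom(m,k)/binom(n,k) is at least 1 - k(n-m)/(n-k+1). -/

import Mathlib

theorem stmt_1 (n m k : ℕ) (hk : 1 ≤ k) (hkm : k ≤ m) (hmn : m ≤ n) :
    (m.choose k : ℝ) / (n.choose k : ℝ)
      ≥ 1 - (k : ℝ) * ((n : ℝ) - m) / ((n : ℝ) - k + 1) := by
  have hkn : k ≤ n := le_trans hkm hmn
  set x : ℝ := ((n : ℝ) - m) / ((n : ℝ) - k + 1) with hx
  have hden : (0 : ℝ) < (n : ℝ) - k + 1 := by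
    have : (k : ℝ) ≤ n := by exact_mod_cast hkn
    linarith
  have hxnonneg : 0 ≤ x := by
    apply div_nonneg _ hden.le
    have : (m : ℝ) ≤ n := by exact_mod_cast hmn
    linarith
  have hxle : x ≤ 1 := by
    rw [div_le_one hden]
    have : (k : ℝ) ≤ m := by exact_mod_cast hkm
    linarith
  -- cast descFactorial as real product
  have castdf : ∀ a : ℕ, k ≤ a →
      (a.descFactorial k : ℝ) = ∏ i ∈ Finset.range k, ((a : ℝ) - i) := by
    intro a ha
    rw [Nat.descFactorial_eq_prod_range]
    push_cast
    refine Finset.prod_congr rfl fun i hi => ?_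
    have : i ≤ a := le_trans (le_of_lt (Finset.mem_range.mp hi)) ha
    push_cast [this]
    ring
  have castchoose : ∀ a : ℕ, k ≤ a →
      (a.choose k : ℝ) = (∏ i ∈ Finset.range k, ((a : ℝ) - i)) / (Nat.factorial k : ℝ) := by
    intro a ha
    rw [← castdf a ha, Nat.descFactorial_eq_factorial_mul_choose]
    push_cast
    field_simp
  have hfact : (0 : ℝ) < (Nat.factorial k : ℝ) := by exact_mod_cast Nat.factorial_pos k
  have hratio : (m.choose k : ℝ) / (n.choose k : ℝ)
      = ∏ i ∈ Finset.range k, (((m : ℝ) - i) / ((n : ℝ) - i)) := by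
    rw [castchoose m hkm, castchoose n hkn, Finset.prod_div_distrib]
    rw [div_div_div_comm, div_self (ne_of_gt hfact), div_one]
  have hfac : ∀ i ∈ Finset.range k, (1 : ℝ) - x ≤ ((m : ℝ) - i) / ((n : ℝ) - i) := by
    intro i hi
    have hik : i < k := Finset.mem_range.mp hi
    have hikr : (i : ℝ) ≤ (k : ℝ) - 1 := by
      have : (i : ℝ) + 1 ≤ k := by exact_mod_cast hik
      linarith
    have hdi : (0 : ℝ) < (n : ℝ) - i := by
      have : (k : ℝ) ≤ n := by exact_mod_cast hkn
      linarith
    have key : ((m : ℝ) - i) / ((n : ℝ) - i) = 1 - ((n : ℝ) - m) / ((n : ℝ) - i) := by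
      field_simp
      ring
    rw [key, hx]
    have hnm : (0 : ℝ) ≤ (n : ℝ) - m := by
      have : (m : ℝ) ≤ n := by exact_mod_cast hmn
      linarith
    have : ((n : ℝ) - m) / ((n : ℝ) - i) ≤ ((n : ℝ) - m) / ((n : ℝ) - k + 1) := by
      apply div_le_div_of_nonneg_left hnm hden
      · linarith
    linarith
  have hprod : (1 - x) ^ k ≤ ∏ i ∈ Finset.range k, (((m : ℝ) - i) / ((n : ℝ) - i)) := by
    calc (1 - x) ^ k = ∏ _i ∈ Finset.range k, (1 - x) := by
          rw [Finset.prod_const, Finset.card_range]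
      _ ≤ _ := Finset.prod_le_prod (fun i _ => by linarith) hfac
  have hbern : 1 - (k : ℝ) * x ≤ (1 - x) ^ k := by
    have := one_add_mul_le_pow (a := -x) (by linarith) k
    simpa [sub_eq_add_neg, mul_comm, mul_neg] using this
  rw [hratio, ge_iff_le, mul_div_assoc]
  calc (1 : ℝ) - (k : ℝ) * x ≤ (1 - x) ^ k := hbern
    _ ≤ _ := hprod
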